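/- (Weak limit along balls) Let μ ∈ M_s be a finite measure and T a CZO bounded in L²(μ). For every open ball B, lim_{t→0} ∫_B T_t(μ) dμ = ∫_B T(χ_{ℝ^d\B} μ) dμ, where T_t(μ)(x) = ∫_{|x−y|>t} K(x−y)dμ(y) and T(χ_{ℝ^d\B}μ)(x) = ∫_{ℝ^d\B} K(x−y)dμ(y) (absolutely convergent for x ∈ B under the assumption T_*(μ) ∈ L¹(μ)). -/

import Mathlib

open MeasureTheory Metric Set Filter
open scoped ENNReal NNReal Topology

noncomputable section

-- helper: monotone nonneg function on (0,∞) tending to 0 along 1/(n+1) tends to 0 on 𝓝[>]0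
theorem aux_tendsto_of_mono (u : ℝ → ℝ)
    (h0 : ∀ t, 0 < t → 0 ≤ u t)
    (hmono : ∀ a b : ℝ, 0 < a → a ≤ b → u a ≤ u b)
    (hseq : Tendsto (fun n : ℕ => u (1 / (n + 1))) atTop (𝓝 0)) :
    Tendsto u (𝓝[>] (0 : ℝ)) (𝓝 0) := by
  rw [Metric.tendsto_nhdsWithin_nhds]
  intro ε hε
  have : ∀ᶠ n : ℕ in atTop, dist (u (1 / (n + 1))) 0 < ε := hseq (Metric.ball_mem_nhds _ hε)
  obtain ⟨n, hn⟩ := this.exists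
  have hpos : (0 : ℝ) < 1 / (n + 1) := by positivity
  refine ⟨1 / (n + 1), hpos, ?_⟩
  intro t ht hdist
  have ht : (0:ℝ) < t := ht
  have ht' : t < 1 / (n + 1) := by
    have := hdist
    rw [Real.dist_eq, sub_zero, abs_of_pos ht] at this
    exact this
  have h1 : u t ≤ u (1 / (n + 1)) := hmono t _ ht ht'.le
  have h2 : |u (1 / (n + 1))| < ε := by
    rw [Real.dist_eq, sub_zero] at hn; exact hn
  rw [Real.dist_eq, sub_zero, abs_of_nonneg (h0 t ht)]
  calc u t ≤ u (1 / (n + 1)) := h1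
    _ ≤ |u (1 / (n + 1))| := le_abs_self _
    _ < ε := h2

-- helper: set integrals over shrinking sets tend to zero
theorem aux_setint_tendsto {X : Type*} [MeasurableSpace X] {μ : Measure X} [IsFiniteMeasure μ]
    (B : Set X) (hB : MeasurableSet B) (a : X → ℝ) (ha : Measurable a)
    (hapos : ∀ x ∈ B, 0 < a x) (g : X → ℝ) (hg : IntegrableOn g B μ) (hgpos : ∀ x, 0 ≤ g x) :
    Tendsto (fun t : ℝ => ∫ x in B ∩ {x | a x < t}, g x ∂μ) (𝓝[>] (0 : ℝ)) (𝓝 0) := by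
  have hmeas : ∀ t : ℝ, MeasurableSet (B ∩ {x | a x < t}) := fun t =>
    hB.inter (measurableSet_lt ha measurable_const)
  set g' : X → ℝ := B.indicator g with hg'def
  have hg' : Integrable g' μ := (integrable_indicator_iff hB).2 hg
  have hEq : ∀ t : ℝ, ∫ x in B ∩ {x | a x < t}, g x ∂μ
      = ∫ x, (B ∩ {x | a x < t}).indicator g' x ∂μ := by
    intro t
    rw [integral_indicator (hmeas t)]
    refine (setIntegral_congr_fun (hmeas t) ?_).symm
    intro x hx
    exact Set.indicator_of_mem hx.1 g
  apply aux_tendsto_of_mono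
  · intro t ht
    exact setIntegral_nonneg (hmeas t) (fun x _ => hgpos x)
  · intro t t' ht htt'
    refine setIntegral_mono_set (hg.mono_set Set.inter_subset_left) ?_ ?_
    · exact Eventually.of_forall fun x => hgpos x
    · refine HasSubset.Subset.eventuallyLE ?_
      intro x hx
      exact ⟨hx.1, lt_of_lt_of_le hx.2 htt'⟩
  · -- DCT along the sequence 1/(n+1)
    have key : Tendsto (fun n : ℕ =>
        ∫ x, (B ∩ {x | a x < 1 / (n + 1)}).indicator g' x ∂μ) atTop (𝓝 (∫ _ : X, (0:ℝ) ∂μ)) := by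
      apply tendsto_integral_of_dominated_convergence (fun x => ‖g' x‖)
      · intro n
        exact (hg'.aestronglyMeasurable).indicator (hmeas _)
      · exact hg'.norm
      · intro n
        exact Eventually.of_forall fun x => norm_indicator_le_norm_self g' x
      · refine Eventually.of_forall fun x => ?_
        by_cases hx : x ∈ B
        · obtain ⟨N, hN⟩ := exists_nat_one_div_lt (hapos x hx)
          refine tendsto_const_nhds.congr' ?_
          filter_upwards [eventually_ge_atTop N] with n hn
          have h1 : (1 : ℝ) / (n + 1) ≤ 1 / (N + 1) := by
            apply one_div_le_one_div_of_le
            · positivity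
            · have := (Nat.cast_le (α := ℝ)).mpr hn; push_cast; linarith
          have : ¬ a x < 1 / (n + 1) := by
            push_neg
            calc (1:ℝ) / (n + 1) ≤ 1 / (N + 1) := h1
              _ ≤ a x := hN.le
          exact (Set.indicator_of_notMem (fun hmem => this hmem.2) g').symm
        · refine tendsto_const_nhds.congr' ?_
          filter_upwards with n
          exact (Set.indicator_of_notMem (fun hmem => hx hmem.1) g').symm
    rw [integral_zero] at key
    simpa only [← hEq] using key

-- helper: a kernel with the smoothness estimate is measurable
theorem aux_K_measurable {E : Type*} [MeasurableSpace E] [NormedAddCommGroup E] [BorelSpace E]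
    (s CK : ℝ) (K : E → ℂ)
    (hsmooth : ∀ x x' : E, x ≠ 0 → ‖x - x'‖ ≤ ‖x‖ / 2 →
      ‖K x - K x'‖ ≤ CK * ‖x - x'‖ / ‖x‖ ^ (s + 1)) :
    Measurable K := by
  apply measurable_of_continuousOn_compl_singleton (0 : E)
  intro x hx
  have hx0 : x ≠ 0 := by simpa using hx
  apply ContinuousAt.continuousWithinAt
  rw [ContinuousAt, tendsto_iff_norm_sub_tendsto_zero]
  have hpos : (0 : ℝ) < ‖x‖ / 2 := by
    have : 0 < ‖x‖ := norm_pos_iff.2 hx0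
    linarith
  apply squeeze_zero' (g := fun x' => CK * ‖x - x'‖ / ‖x‖ ^ (s + 1))
  · exact Eventually.of_forall fun x' => norm_nonneg _
  · filter_upwards [Metric.ball_mem_nhds x hpos] with x' hx'
    have h1 : ‖x - x'‖ ≤ ‖x‖ / 2 := by
      rw [norm_sub_rev]
      rw [Metric.mem_ball, dist_eq_norm] at hx'
      exact hx'.le
    calc ‖K x' - K x‖ = ‖K x - K x'‖ := norm_sub_rev _ _
      _ ≤ CK * ‖x - x'‖ / ‖x‖ ^ (s + 1) := hsmooth x x' hx0 h1
  · have hc : Continuous fun x' : E => CK * ‖x - x'‖ / ‖x‖ ^ (s + 1) := by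
      exact (continuous_const.mul (continuous_const.sub continuous_id).norm).div_const _
    have := hc.tendsto x
    simpa using this

/-- Weak limit along balls: let `μ ∈ M_s` be finite, `K` an antisymmetric
`s`-dimensional CZ kernel whose associated operator is bounded in `L²(μ)`.  Then for every
open ball `B`, `∫_B T_t(μ) dμ → ∫_B T(χ_{ℝ^d \ B} μ) dμ` as `t → 0⁺`. -/
theorem statement15 (d : ℕ) (s CK : ℝ) (hs : 0 < s) (hsd : s < d) (hCK : 0 < CK)
    (K : EuclideanSpace ℝ (Fin d) → ℂ)
    (hsize : ∀ x : EuclideanSpace ℝ (Fin d), x ≠ 0 → ‖K x‖ ≤ CK / ‖x‖ ^ s)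
    (hodd : ∀ x : EuclideanSpace ℝ (Fin d), K (-x) = -K x)
    (hsmooth : ∀ x x' : EuclideanSpace ℝ (Fin d), x ≠ 0 → ‖x - x'‖ ≤ ‖x‖ / 2 →
      ‖K x - K x'‖ ≤ CK * ‖x - x'‖ / ‖x‖ ^ (s + 1))
    (μ : Measure (EuclideanSpace ℝ (Fin d))) [IsFiniteMeasure μ]
    (hgrowth : ∀ (y : EuclideanSpace ℝ (Fin d)) (t : ℝ), 0 < t →
      μ (ball y t) ≤ ENNReal.ofReal (t ^ s))
    (hL2 : ∃ Cb : ℝ, 0 < Cb ∧ ∀ f : EuclideanSpace ℝ (Fin d) → ℂ, MemLp f 2 μ →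
      ∀ ε : ℝ, 0 < ε →
        (∫ x, ‖∫ y in (ball x ε)ᶜ, K (x - y) * f y ∂μ‖ ^ 2 ∂μ) ≤ Cb * ∫ x, ‖f x‖ ^ 2 ∂μ)
    (z : EuclideanSpace ℝ (Fin d)) (R : ℝ) (hR : 0 < R) :
    Tendsto (fun t : ℝ => ∫ x in ball z R, (∫ y in (ball x t)ᶜ, K (x - y) ∂μ) ∂μ)
      (𝓝[>] (0 : ℝ))
      (𝓝 (∫ x in ball z R, (∫ y in (ball z R)ᶜ, K (x - y) ∂μ) ∂μ)) := by
  classical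
  set B : Set (EuclideanSpace ℝ (Fin d)) := ball z R with hBdef
  have hBmeas : MeasurableSet B := measurableSet_ball
  have hKmeas : Measurable K := aux_K_measurable s CK K hsmooth
  have hKsub : Measurable fun p : EuclideanSpace ℝ (Fin d) × EuclideanSpace ℝ (Fin d) => K (p.1 - p.2) :=
    hKmeas.comp (measurable_fst.sub measurable_snd)
  -- the truncated kernel on the product space
  set G : ℝ → EuclideanSpace ℝ (Fin d) × EuclideanSpace ℝ (Fin d) → ℂ :=
    fun t => ({p : EuclideanSpace ℝ (Fin d) × EuclideanSpace ℝ (Fin d) | t ≤ dist p.1 p.2}).indicator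
      (fun p => K (p.1 - p.2)) with hGdef
  have hGapp : ∀ (t : ℝ) p, G t p = if t ≤ dist p.1 p.2 then K (p.1 - p.2) else 0 := by
    intro t p
    rw [hGdef]
    simp only [Set.indicator_apply, Set.mem_setOf_eq]
  have hSetMeas : ∀ t : ℝ,
      MeasurableSet {p : EuclideanSpace ℝ (Fin d) × EuclideanSpace ℝ (Fin d) | t ≤ dist p.1 p.2} := by
    intro t
    exact (isClosed_le continuous_const (continuous_fst.dist continuous_snd)).measurableSet
  have hGmeas : ∀ t : ℝ, Measurable (G t) := fun t => hKsub.indicator (hSetMeas t)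
  -- size estimate for the truncated kernel
  have hKbd : ∀ t : ℝ, 0 < t → ∀ x y : EuclideanSpace ℝ (Fin d), t ≤ dist x y →
      ‖K (x - y)‖ ≤ CK / t ^ s := by
    intro t ht x y hd
    have hnorm : t ≤ ‖x - y‖ := by rwa [dist_eq_norm] at hd
    have hne : x - y ≠ 0 := by
      intro h
      rw [h, norm_zero] at hnorm
      linarith
    calc ‖K (x - y)‖ ≤ CK / ‖x - y‖ ^ s := hsize _ hne
      _ ≤ CK / t ^ s := by
          apply div_le_div_of_nonneg_left hCK.le (Real.rpow_pos_of_pos ht s)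
          exact Real.rpow_le_rpow ht.le hnorm hs.le
  have hGbd : ∀ t : ℝ, 0 < t → ∀ p : EuclideanSpace ℝ (Fin d) × EuclideanSpace ℝ (Fin d),
      ‖G t p‖ ≤ CK / t ^ s := by
    intro t ht p
    rw [hGapp]
    by_cases hp : t ≤ dist p.1 p.2
    · rw [if_pos hp]
      exact hKbd t ht p.1 p.2 hp
    · rw [if_neg hp, norm_zero]
      positivity
  -- integrability of the truncated kernel on products
  have hGint : ∀ t : ℝ, 0 < t → ∀ A A' : Set (EuclideanSpace ℝ (Fin d)),
      Integrable (G t) ((μ.restrict A).prod (μ.restrict A')) := by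
    intro t ht A A'
    refine Integrable.mono' (integrable_const (CK / t ^ s))
      (hGmeas t).aestronglyMeasurable (Eventually.of_forall fun p => hGbd t ht p)
  -- local notation for the two half-operators
  set H : ℝ → EuclideanSpace ℝ (Fin d) → ℂ :=
    fun t x => ∫ y, G t (x, y) ∂(μ.restrict Bᶜ) with hHdef
  set Q : ℝ → EuclideanSpace ℝ (Fin d) → ℂ :=
    fun t x => ∫ y, G t (x, y) ∂(μ.restrict B) with hQdef
  have hballc : ∀ (t : ℝ) (x : EuclideanSpace ℝ (Fin d)),
      (ball x t)ᶜ = {y : EuclideanSpace ℝ (Fin d) | t ≤ dist x y} := by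
    intro t x
    ext y
    simp [Metric.mem_ball, not_lt, dist_comm]
  have hGapp' : ∀ (t : ℝ) (x y : EuclideanSpace ℝ (Fin d)),
      G t (x, y) = if t ≤ dist x y then K (x - y) else 0 := fun t x y => hGapp t (x, y)
  have hGx : ∀ (t : ℝ) (x : EuclideanSpace ℝ (Fin d)),
      (fun y => G t (x, y)) = ((ball x t)ᶜ).indicator (fun y => K (x - y)) := by
    intro t x
    funext y
    rw [hGapp']
    by_cases hy : t ≤ dist x y
    · have hy' : y ∈ (ball x t)ᶜ := by rw [hballc]; exact hy
      rw [if_pos hy, Set.indicator_of_mem hy']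
    · have hy' : y ∉ (ball x t)ᶜ := by rw [hballc]; exact hy
      rw [if_neg hy, Set.indicator_of_notMem hy']
  have hHrepr : ∀ (t : ℝ) (x : EuclideanSpace ℝ (Fin d)),
      H t x = ∫ y in (ball x t)ᶜ ∩ Bᶜ, K (x - y) ∂μ := by
    intro t x
    rw [hHdef]
    show ∫ y, G t (x, y) ∂(μ.restrict Bᶜ) = _
    rw [hGx t x, setIntegral_indicator (measurableSet_ball.compl), Set.inter_comm]
  have hQrepr : ∀ (t : ℝ) (x : EuclideanSpace ℝ (Fin d)),
      Q t x = ∫ y in (ball x t)ᶜ ∩ B, K (x - y) ∂μ := by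
    intro t x
    rw [hQdef]
    show ∫ y, G t (x, y) ∂(μ.restrict B) = _
    rw [hGx t x, setIntegral_indicator (measurableSet_ball.compl), Set.inter_comm]
  have hHint : ∀ t : ℝ, 0 < t → Integrable (H t) (μ.restrict B) := by
    intro t ht
    exact (hGint t ht B Bᶜ).integral_prod_left
  have hQint : ∀ t : ℝ, 0 < t → Integrable (Q t) (μ.restrict B) := by
    intro t ht
    exact (hGint t ht B B).integral_prod_left
  -- pointwise decomposition of the truncated integral
  have hIOn : ∀ (t : ℝ), 0 < t → ∀ (x : EuclideanSpace ℝ (Fin d)),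
      IntegrableOn (fun y => K (x - y)) ((ball x t)ᶜ) μ := by
    intro t ht x
    refine Integrable.mono' (integrable_const (CK / t ^ s))
      ((hKmeas.comp (measurable_const.sub measurable_id)).aestronglyMeasurable) ?_
    rw [ae_restrict_iff' measurableSet_ball.compl]
    refine Eventually.of_forall fun y hy => ?_
    rw [hballc] at hy
    exact hKbd t ht x y hy
  have hsplit : ∀ (t : ℝ), 0 < t → ∀ (x : EuclideanSpace ℝ (Fin d)),
      (∫ y in (ball x t)ᶜ, K (x - y) ∂μ) = Q t x + H t x := by
    intro t ht x
    rw [hQrepr, hHrepr]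
    have hd : Disjoint ((ball x t)ᶜ ∩ B) ((ball x t)ᶜ ∩ Bᶜ) :=
      Set.disjoint_of_subset Set.inter_subset_right Set.inter_subset_right disjoint_compl_right
    rw [← setIntegral_union hd
      (measurableSet_ball.compl.inter hBmeas.compl)
      ((hIOn t ht x).mono_set Set.inter_subset_left)
      ((hIOn t ht x).mono_set Set.inter_subset_left), Set.inter_union_compl]
  -- the symmetric part vanishes
  have hQzero : ∀ t : ℝ, 0 < t → ∫ x in B, Q t x ∂μ = 0 := by
    intro t ht
    have h1 : ∫ x in B, Q t x ∂μ = ∫ p, G t p ∂((μ.restrict B).prod (μ.restrict B)) :=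
      (integral_prod (G t) (hGint t ht B B)).symm
    have hswap : ∫ p : EuclideanSpace ℝ (Fin d) × EuclideanSpace ℝ (Fin d),
        G t p.swap ∂((μ.restrict B).prod (μ.restrict B))
        = ∫ p, G t p ∂((μ.restrict B).prod (μ.restrict B)) := integral_prod_swap (G t)
    have hanti : ∀ p : EuclideanSpace ℝ (Fin d) × EuclideanSpace ℝ (Fin d),
        G t p.swap = - G t p := by
      intro p
      have e1 : G t p.swap = if t ≤ dist p.2 p.1 then K (p.2 - p.1) else 0 := hGapp' t p.2 p.1
      have e2 : G t p = if t ≤ dist p.1 p.2 then K (p.1 - p.2) else 0 := hGapp' t p.1 p.2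
      rw [e1, e2]
      by_cases hp : t ≤ dist p.1 p.2
      · have hp' : t ≤ dist p.2 p.1 := by rwa [dist_comm]
        rw [if_pos hp, if_pos hp']
        rw [← neg_sub p.1 p.2, hodd]
      · have hp' : ¬ t ≤ dist p.2 p.1 := by rw [dist_comm]; exact hp
        rw [if_neg hp, if_neg hp', neg_zero]
    have h2 : ∫ p, G t p ∂((μ.restrict B).prod (μ.restrict B))
        = - ∫ p, G t p ∂((μ.restrict B).prod (μ.restrict B)) := by
      conv_lhs => rw [← hswap]
      rw [show (fun p : EuclideanSpace ℝ (Fin d) × EuclideanSpace ℝ (Fin d) => G t p.swap)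
        = fun p => - G t p from funext hanti]
      rw [integral_neg]
    have h3 : ∫ p, G t p ∂((μ.restrict B).prod (μ.restrict B)) = 0 := by
      have := congrArg (fun w => w + ∫ p, G t p ∂((μ.restrict B).prod (μ.restrict B))) h2
      simp only [neg_add_cancel] at this
      exact add_self_eq_zero.mp this
    rw [h1, h3]
  -- hence the truncated bilinear form only sees the exterior part
  have hFt : ∀ t : ℝ, 0 < t →
      (∫ x in B, (∫ y in (ball x t)ᶜ, K (x - y) ∂μ) ∂μ) = ∫ x in B, H t x ∂μ := by
    intro t ht
    rw [integral_congr_ae (Eventually.of_forall fun x => hsplit t ht x)]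
    rw [integral_add (hQint t ht) (hHint t ht), hQzero t ht, zero_add]
  -- L² bound machinery
  obtain ⟨Cb, hCb, hL2'⟩ := hL2
  set f₀ : EuclideanSpace ℝ (Fin d) → ℂ := Bᶜ.indicator (fun _ => (1 : ℂ)) with hf₀def
  have hf₀ : MemLp f₀ 2 μ := (memLp_const (1 : ℂ)).indicator hBmeas.compl
  set A : ℝ := Cb * ∫ x, ‖f₀ x‖ ^ 2 ∂μ with hAdef
  have hA0 : 0 ≤ A := by
    apply mul_nonneg hCb.le
    apply integral_nonneg
    intro x
    positivity
  have hHL2 : ∀ t : ℝ, 0 < t → (∫ x, ‖H t x‖ ^ 2 ∂μ) ≤ A := by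
    intro t ht
    have key := hL2' f₀ hf₀ t ht
    have hrw : ∀ x : EuclideanSpace ℝ (Fin d),
        (∫ y in (ball x t)ᶜ, K (x - y) * f₀ y ∂μ) = H t x := by
      intro x
      have h1 : ∀ y : EuclideanSpace ℝ (Fin d),
          K (x - y) * f₀ y = Bᶜ.indicator (fun y => K (x - y)) y := by
        intro y
        rw [hf₀def]
        by_cases hy : y ∈ Bᶜ
        · rw [Set.indicator_of_mem hy, Set.indicator_of_mem hy, mul_one]
        · rw [Set.indicator_of_notMem hy, Set.indicator_of_notMem hy, mul_zero]
      rw [show (∫ y in (ball x t)ᶜ, K (x - y) * f₀ y ∂μ)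
          = ∫ y in (ball x t)ᶜ, Bᶜ.indicator (fun y => K (x - y)) y ∂μ from
        setIntegral_congr_fun measurableSet_ball.compl (fun y _ => h1 y),
        setIntegral_indicator hBmeas.compl]
      exact (hHrepr t x).symm
    calc (∫ x, ‖H t x‖ ^ 2 ∂μ)
        = ∫ x, ‖∫ y in (ball x t)ᶜ, K (x - y) * f₀ y ∂μ‖ ^ 2 ∂μ := by
          refine integral_congr_ae (Eventually.of_forall fun x => ?_)
          show ‖H t x‖ ^ 2 = ‖∫ y in (ball x t)ᶜ, K (x - y) * f₀ y ∂μ‖ ^ 2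
          rw [hrw x]
      _ ≤ Cb * ∫ x, ‖f₀ x‖ ^ 2 ∂μ := key
      _ = A := rfl
  -- measurability and boundedness of H t
  have hHsm : ∀ t : ℝ, StronglyMeasurable (H t) := by
    intro t
    exact (hGmeas t).stronglyMeasurable.integral_prod_right'
  have hHbd : ∀ t : ℝ, 0 < t → ∀ x, ‖H t x‖ ≤ (CK / t ^ s) * (μ Set.univ).toReal := by
    intro t ht x
    rw [hHrepr t x]
    have hb : ∀ y ∈ (ball x t)ᶜ ∩ Bᶜ, ‖K (x - y)‖ ≤ CK / t ^ s := by
      intro y hy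
      have : y ∈ (ball x t)ᶜ := hy.1
      rw [hballc] at this
      exact hKbd t ht x y this
    calc ‖∫ y in (ball x t)ᶜ ∩ Bᶜ, K (x - y) ∂μ‖
        ≤ (CK / t ^ s) * (μ ((ball x t)ᶜ ∩ Bᶜ)).toReal :=
          norm_setIntegral_le_of_norm_le_const (measure_lt_top _ _)
            hb
      _ ≤ (CK / t ^ s) * (μ Set.univ).toReal := by
          apply mul_le_mul_of_nonneg_left _ (by positivity)
          exact ENNReal.toReal_mono (measure_ne_top μ _) (measure_mono (Set.subset_univ _))
  have hHsqint : ∀ t : ℝ, 0 < t → Integrable (fun x => ‖H t x‖ ^ 2) μ := by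
    intro t ht
    refine Integrable.mono' (integrable_const (((CK / t ^ s) * (μ Set.univ).toReal) ^ 2))
      (((hHsm t).norm.pow 2).aestronglyMeasurable) (Eventually.of_forall fun x => ?_)
    rw [Real.norm_eq_abs, abs_of_nonneg (by positivity)]
    exact pow_le_pow_left₀ (norm_nonneg _) (hHbd t ht x) 2
  have hHnrmint : ∀ t : ℝ, 0 < t → Integrable (fun x => ‖H t x‖) μ := by
    intro t ht
    refine Integrable.mono' (integrable_const ((CK / t ^ s) * (μ Set.univ).toReal))
      ((hHsm t).norm.aestronglyMeasurable) (Eventually.of_forall fun x => ?_)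
    rw [Real.norm_eq_abs, abs_of_nonneg (norm_nonneg _)]
    exact hHbd t ht x
  -- the AM–GM estimate for set integrals of ‖H t‖
  have hAMGM : ∀ t : ℝ, 0 < t → ∀ c : ℝ, 0 < c → ∀ S : Set (EuclideanSpace ℝ (Fin d)),
      MeasurableSet S →
      (∫ x in S, ‖H t x‖ ∂μ) ≤ A / (2 * c) + (c / 2) * (μ S).toReal := by
    intro t ht c hc S hS
    have step1 : (∫ x in S, ‖H t x‖ ∂μ)
        ≤ ∫ x in S, (‖H t x‖ ^ 2 / (2 * c) + c / 2) ∂μ := by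
      refine setIntegral_mono_on ((hHnrmint t ht).integrableOn) ?_ hS ?_
      · exact (((hHsqint t ht).div_const (2 * c)).add (integrable_const (c / 2))).integrableOn
      · intro x _
        have hc2 : 0 < 2 * c := by linarith
        have hrw : ‖H t x‖ ^ 2 / (2 * c) + c / 2 = (‖H t x‖ ^ 2 + c * c) / (2 * c) := by
          field_simp
        rw [hrw, le_div_iff₀ hc2]
        nlinarith [sq_nonneg (‖H t x‖ - c)]
    have step2 : (∫ x in S, (‖H t x‖ ^ 2 / (2 * c) + c / 2) ∂μ)
        = (∫ x in S, ‖H t x‖ ^ 2 ∂μ) / (2 * c) + (c / 2) * (μ S).toReal := by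
      rw [integral_add ((hHsqint t ht).integrableOn.div_const (2 * c))
        (integrable_const (c / 2)).integrableOn]
      rw [integral_div, setIntegral_const, smul_eq_mul, measureReal_def]
      ring
    have step3 : (∫ x in S, ‖H t x‖ ^ 2 ∂μ) ≤ A := by
      refine le_trans (setIntegral_le_integral (hHsqint t ht)
        (Eventually.of_forall fun x => by positivity)) (hHL2 t ht)
    rw [step2] at step1
    have : (∫ x in S, ‖H t x‖ ^ 2 ∂μ) / (2 * c) ≤ A / (2 * c) := by
      apply div_le_div_of_nonneg_right step3 ?_
      linarith
    linarith
  -- the exterior potential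
  set hout : EuclideanSpace ℝ (Fin d) → ℂ := fun x => ∫ y in Bᶜ, K (x - y) ∂μ with houtdef
  have houtsm : StronglyMeasurable hout :=
    (hKsub.stronglyMeasurable).integral_prod_right' (ν := μ.restrict Bᶜ)
  set a : EuclideanSpace ℝ (Fin d) → ℝ := fun x => R - dist x z with hadef
  have hameas : Measurable a :=
    measurable_const.sub (continuous_id.dist continuous_const).measurable
  have hapos : ∀ x ∈ B, 0 < a x := by
    intro x hx
    have : dist x z < R := mem_ball.mp hx
    simp only [hadef]
    linarith
  -- on the good region the truncation does not matter
  have hHeq : ∀ t : ℝ, 0 < t → ∀ x : EuclideanSpace ℝ (Fin d), t ≤ a x → H t x = hout x := by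
    intro t ht x htx
    rw [hHrepr t x, houtdef]
    have hsub : Bᶜ ⊆ (ball x t)ᶜ := by
      intro y hy
      intro hball
      apply hy
      have h1 : dist y x < t := mem_ball.mp hball
      have h2 : dist x z ≤ R - t := by
        simp only [hadef] at htx
        linarith
      have : dist y z < R := by
        calc dist y z ≤ dist y x + dist x z := dist_triangle _ _ _
          _ < t + (R - t) := by linarith
          _ = R := by ring
      exact mem_ball.mpr this
    rw [Set.inter_eq_right.mpr hsub]
  -- integrability of the exterior potential on B
  have houtint : IntegrableOn hout B μ := by
    refine ⟨houtsm.aestronglyMeasurable.restrict, ?_⟩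
    have hMb : ∀ t : ℝ, 0 < t →
        (∫ x in B, ‖H t x‖ ∂μ) ≤ A / (2 * 1) + (1 / 2) * (μ B).toReal := fun t ht =>
      hAMGM t ht 1 one_pos B hBmeas
    have hlb : ∀ t : ℝ, 0 < t → (∫⁻ x in B, ‖H t x‖₊ ∂μ)
        ≤ ENNReal.ofReal (A / (2 * 1) + (1 / 2) * (μ B).toReal) := by
      intro t ht
      rw [show (∫⁻ x in B, (‖H t x‖₊ : ℝ≥0∞) ∂μ) = ENNReal.ofReal (∫ x in B, ‖H t x‖ ∂μ) from (ofReal_integral_norm_eq_lintegral_enorm (hHint t ht)).symm]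
      exact ENNReal.ofReal_le_ofReal (hMb t ht)
    have hae : ∀ᵐ x ∂(μ.restrict B), (‖hout x‖₊ : ℝ≥0∞)
        = Filter.liminf (fun n : ℕ => (‖H (1 / (n + 1)) x‖₊ : ℝ≥0∞)) atTop := by
      filter_upwards [ae_restrict_mem hBmeas] with x hx
      obtain ⟨N, hN⟩ := exists_nat_one_div_lt (hapos x hx)
      have htend : Tendsto (fun n : ℕ => (‖H (1 / (n + 1)) x‖₊ : ℝ≥0∞)) atTop
          (𝓝 ((‖hout x‖₊ : ℝ≥0∞))) := by
        refine tendsto_const_nhds.congr' ?_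
        filter_upwards [eventually_ge_atTop N] with n hn
        have h1n : (0 : ℝ) < 1 / (n + 1) := by positivity
        have hle : (1 : ℝ) / (n + 1) ≤ a x := by
          have hcast : ((N : ℝ) + 1) ≤ ((n : ℝ) + 1) := by
            have := (Nat.cast_le (α := ℝ)).mpr hn
            linarith
          have : (1 : ℝ) / (n + 1) ≤ 1 / (N + 1) :=
            one_div_le_one_div_of_le (by positivity) hcast
          linarith [hN]
        rw [hHeq _ h1n x hle]
      exact htend.liminf_eq.symm
    have hfin : (∫⁻ x in B, ‖hout x‖₊ ∂μ)
        ≤ ENNReal.ofReal (A / (2 * 1) + (1 / 2) * (μ B).toReal) := by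
      calc (∫⁻ x in B, ‖hout x‖₊ ∂μ)
          = ∫⁻ x in B, Filter.liminf (fun n : ℕ => (‖H (1 / (n + 1)) x‖₊ : ℝ≥0∞)) atTop ∂μ :=
            lintegral_congr_ae hae
        _ ≤ Filter.liminf (fun n : ℕ => ∫⁻ x in B, ‖H (1 / (n + 1)) x‖₊ ∂μ) atTop :=
            lintegral_liminf_le fun n => (hHsm _).measurable.nnnorm.coe_nnreal_ennreal
        _ ≤ Filter.liminf (fun _ : ℕ => ENNReal.ofReal (A / (2 * 1) + (1 / 2) * (μ B).toReal))
              atTop :=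
            Filter.liminf_le_liminf (Eventually.of_forall fun n => hlb (1 / (n + 1)) (by positivity))
        _ = ENNReal.ofReal (A / (2 * 1) + (1 / 2) * (μ B).toReal) := Filter.liminf_const _
    exact lt_of_le_of_lt hfin ENNReal.ofReal_lt_top
  -- splitting the integral over B into good and bad regions
  have hdecomp : ∀ (F : EuclideanSpace ℝ (Fin d) → ℂ), Integrable F (μ.restrict B) →
      ∀ t : ℝ, ∫ x in B, F x ∂μ
        = (∫ x in B ∩ {x | a x < t}ᶜ, F x ∂μ) + ∫ x in B ∩ {x | a x < t}, F x ∂μ := by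
    intro F hF t
    have hmeas2 : MeasurableSet (B ∩ {x | a x < t}) :=
      hBmeas.inter (measurableSet_lt hameas measurable_const)
    have hdisj : Disjoint (B ∩ {x | a x < t}ᶜ) (B ∩ {x | a x < t}) :=
      Set.disjoint_of_subset Set.inter_subset_right Set.inter_subset_right
        (disjoint_compl_left)
    have hi1 : IntegrableOn F (B ∩ {x | a x < t}ᶜ) μ :=
      hF.mono_measure (Measure.restrict_mono Set.inter_subset_left le_rfl)
    have hi2 : IntegrableOn F (B ∩ {x | a x < t}) μ :=
      hF.mono_measure (Measure.restrict_mono Set.inter_subset_left le_rfl)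
    rw [← setIntegral_union hdisj hmeas2 hi1 hi2]
    congr 1
    rw [Set.union_comm, Set.inter_union_compl]
  -- the main term tends to the limit
  have T1 : Tendsto (fun t : ℝ => ∫ x in B ∩ {x | a x < t}ᶜ, hout x ∂μ) (𝓝[>] (0 : ℝ))
      (𝓝 (∫ x in B, hout x ∂μ)) := by
    have hsmall : Tendsto (fun t : ℝ => ∫ x in B ∩ {x | a x < t}, hout x ∂μ) (𝓝[>] (0 : ℝ))
        (𝓝 0) := by
      have haux1 := aux_setint_tendsto B hBmeas a hameas hapos (fun x => ‖hout x‖)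
        houtint.norm (fun x => norm_nonneg _)
      refine squeeze_zero_norm (fun t => ?_) haux1
      exact norm_integral_le_integral_norm _
    have hid : (fun t : ℝ => ∫ x in B ∩ {x | a x < t}ᶜ, hout x ∂μ)
        = fun t : ℝ => (∫ x in B, hout x ∂μ) - ∫ x in B ∩ {x | a x < t}, hout x ∂μ := by
      funext t
      rw [hdecomp hout houtint t]
      ring
    rw [hid]
    simpa using tendsto_const_nhds.sub hsmall
  -- the error term tends to zero
  have T2 : Tendsto (fun t : ℝ => ∫ x in B ∩ {x | a x < t}, H t x ∂μ) (𝓝[>] (0 : ℝ))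
      (𝓝 0) := by
    have haux2 := aux_setint_tendsto B hBmeas a hameas hapos (fun _ => (1 : ℝ))
      (integrableOn_const (measure_ne_top μ B)) (fun _ => zero_le_one)
    rw [Metric.tendsto_nhds]
    intro ε hε
    obtain ⟨c, hc, hεc⟩ : ∃ c : ℝ, 0 < c ∧ ε * c = A + ε :=
      ⟨A / ε + 1, by positivity, by field_simp⟩
    have hAc : A / (2 * c) < ε / 2 := by
      rw [div_lt_iff₀ (by linarith)]
      have hh : ε / 2 * (2 * c) = ε * c := by ring
      rw [hh, hεc]
      linarith
    have hev : ∀ᶠ t in 𝓝[>] (0 : ℝ), (∫ x in B ∩ {x | a x < t}, (1 : ℝ) ∂μ) < ε / c :=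
      haux2.eventually_lt_const (by positivity)
    filter_upwards [hev, self_mem_nhdsWithin] with t hvt ht
    have ht0 : 0 < t := ht
    have hmeasS : MeasurableSet (B ∩ {x | a x < t}) :=
      hBmeas.inter (measurableSet_lt hameas measurable_const)
    have hvrepr : (∫ x in B ∩ {x | a x < t}, (1 : ℝ) ∂μ) = (μ (B ∩ {x | a x < t})).toReal := by
      simp [setIntegral_const, measureReal_def]
    rw [dist_zero_right]
    calc ‖∫ x in B ∩ {x | a x < t}, H t x ∂μ‖
        ≤ ∫ x in B ∩ {x | a x < t}, ‖H t x‖ ∂μ := norm_integral_le_integral_norm _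
      _ ≤ A / (2 * c) + (c / 2) * (μ (B ∩ {x | a x < t})).toReal :=
          hAMGM t ht0 c hc _ hmeasS
      _ < ε := by
          rw [← hvrepr]
          have h1 : (c / 2) * (∫ x in B ∩ {x | a x < t}, (1 : ℝ) ∂μ) < (c / 2) * (ε / c) :=
            mul_lt_mul_of_pos_left hvt (by linarith)
          have h2 : (c / 2) * (ε / c) = ε / 2 := by
            field_simp
          linarith
  -- assemble
  have Tsum := T1.add T2
  rw [add_zero] at Tsum
  refine Tsum.congr' ?_
  filter_upwards [self_mem_nhdsWithin] with t ht
  have ht0 : (0 : ℝ) < t := ht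
  have hgood : ∀ x ∈ B ∩ {x | a x < t}ᶜ, H t x = hout x := by
    intro x hx
    have : ¬ a x < t := hx.2
    exact hHeq t ht0 x (not_lt.mp this)
  have hmeasG : MeasurableSet (B ∩ {x | a x < t}ᶜ) :=
    hBmeas.inter (measurableSet_lt hameas measurable_const).compl
  calc (∫ x in B ∩ {x | a x < t}ᶜ, hout x ∂μ) + ∫ x in B ∩ {x | a x < t}, H t x ∂μ
      = (∫ x in B ∩ {x | a x < t}ᶜ, H t x ∂μ) + ∫ x in B ∩ {x | a x < t}, H t x ∂μ := by
        congr 1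
        exact (setIntegral_congr_fun hmeasG hgood).symm
    _ = ∫ x in B, H t x ∂μ := (hdecomp (H t) (hHint t ht0) t).symm
    _ = ∫ x in B, (∫ y in (ball x t)ᶜ, K (x - y) ∂μ) ∂μ := (hFt t ht0).symm
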